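/- Let Σ be the d×d matrix with entries (r_a²/p_a) δ_{ab} − r_a r_b and H the d×d matrix with entries δ_{ab} p_a − p_a p_b. Then tr(Σ H) ≤ Σ_a r_a² ≤ d. (This is the key quadratic-variation bound in the continuous-time adversarial bandit regret analysis.) -/

import Mathlib

/-- Key quadratic-variation bound for the continuous-time adversarial bandit:
with `Σ_{ab} = (r_a²/p_a) δ_{ab} - r_a r_b` and `H_{ab} = δ_{ab} p_a - p_a p_b`,
one has `tr(Σ H) ≤ ∑_a r_a² ≤ d` whenever `r ∈ [0,1]^d`. -/
theorem bandit_quadratic_variation_trace_bound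
    (d : ℕ) (hd : 1 ≤ d)
    (r : Fin d → ℝ) (hr : ∀ a, r a ∈ Set.Icc (0 : ℝ) 1)
    (p : Fin d → ℝ) (hp_pos : ∀ a, 0 < p a) (hp_sum : ∑ a, p a = 1)
    (S H : Matrix (Fin d) (Fin d) ℝ)
    (hS : ∀ a b, S a b = (r a ^ 2 / p a) * (if a = b then 1 else 0) - r a * r b)
    (hH : ∀ a b, H a b = (if a = b then p a else 0) - p a * p b) :
    (S * H).trace ≤ ∑ a, r a ^ 2 ∧ (∑ a, r a ^ 2) ≤ d := by
  have inner : ∀ a, ∑ b, S a b * H b a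
      = (r a ^ 2 - 2 * (r a ^ 2 * p a)) + r a * p a * (∑ b, r b * p b) := by
    intro a
    have hpa : p a ≠ 0 := (hp_pos a).ne'
    have h1 : ∀ b, S a b * H b a
        = (if b = a then r a ^ 2 - 2 * (r a ^ 2 * p a) else 0) + r a * p a * (r b * p b) := by
      intro b
      by_cases h : b = a
      · subst h
        simp only [hS, hH, if_pos rfl, ↓reduceIte]
        field_simp
        ring
      · simp only [hS, hH, if_neg h, if_neg (Ne.symm h)]
        ring
    simp only [h1, Finset.sum_add_distrib, Finset.sum_ite_eq', Finset.mem_univ, if_true,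
      ← Finset.mul_sum]
  have htr : (S * H).trace
      = (∑ a, (r a ^ 2 - 2 * (r a ^ 2 * p a))) + (∑ b, r b * p b) ^ 2 := by
    have : (S * H).trace = ∑ a, ∑ b, S a b * H b a := by
      simp [Matrix.trace, Matrix.mul_apply]
    rw [this]
    simp only [inner, Finset.sum_add_distrib, ← Finset.sum_mul]
    ring
  have hCS : (∑ b, r b * p b) ^ 2 ≤ ∑ b, r b ^ 2 * p b := by
    have key := Finset.sum_mul_sq_le_sq_mul_sq Finset.univ
      (fun b => Real.sqrt (p b)) (fun b => r b * Real.sqrt (p b))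
    have heq : ∀ b, Real.sqrt (p b) * (r b * Real.sqrt (p b)) = r b * p b := by
      intro b
      have : Real.sqrt (p b) * Real.sqrt (p b) = p b :=
        Real.mul_self_sqrt (hp_pos b).le
      linear_combination r b * this
    have heq2 : ∀ b, Real.sqrt (p b) ^ 2 = p b := fun b => Real.sq_sqrt (hp_pos b).le
    have heq3 : ∀ b, (r b * Real.sqrt (p b)) ^ 2 = r b ^ 2 * p b := by
      intro b; rw [mul_pow, heq2]
    simp only [heq, heq2, heq3, hp_sum, one_mul] at key
    exact key
  constructor
  · have hnn : (0:ℝ) ≤ ∑ b, r b ^ 2 * p b :=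
      Finset.sum_nonneg fun b _ => mul_nonneg (sq_nonneg _) (hp_pos b).le
    rw [htr]
    have : ∑ a, (r a ^ 2 - 2 * (r a ^ 2 * p a))
        = (∑ a, r a ^ 2) - 2 * ∑ a, r a ^ 2 * p a := by
      rw [Finset.sum_sub_distrib, ← Finset.mul_sum]
    rw [this]
    nlinarith [hCS, hnn]
  · calc (∑ a, r a ^ 2) ≤ ∑ _a : Fin d, (1:ℝ) := by
          apply Finset.sum_le_sum
          intro a _
          have h := hr a
          nlinarith [h.1, h.2]
      _ = d := by simp
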